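/- For all n ≥ 1, ∑_{k=0}^{n} (-1)^{n+k} W(n,k) = n!, where W(n,k) are the Ward numbers defined by W(n,k) = k·W(n-1,k) + (n+k-1)·W(n-1,k-1) with W(0,k) = δ_{0,k}. -/
import Mathlib


def wardW : ℕ → ℕ → ℕ
  | 0, 0 => 1
  | 0, _ + 1 => 0
  | _ + 1, 0 => 0
  | n + 1, k + 1 => (k + 1) * wardW n (k + 1) + (n + k + 1) * wardW n k

lemma wardW_eq_zero : ∀ n k : ℕ, n < k → wardW n k = 0 := by
  intro n
  induction n with
  | zero => intro k hk; match k, hk with | k + 1, _ => rfl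
  | succ n ih =>
    intro k hk
    match k, hk with
    | k + 1, hk =>
      have h1 : n < k := Nat.lt_of_succ_lt_succ hk
      show (k + 1) * wardW n (k + 1) + (n + k + 1) * wardW n k = 0
      rw [ih _ h1, ih _ (h1.trans (Nat.lt_succ_self k))]
      ring

lemma ward_sum (n : ℕ) :
    ∑ k ∈ Finset.range (n + 1), (-1 : ℤ) ^ (n + k) * wardW n k = (n.factorial : ℤ) := by
  induction n with
  | zero => simp [wardW]
  | succ n ih =>
    have step : ∑ k ∈ Finset.range (n + 2), (-1 : ℤ) ^ (n + 1 + k) * wardW (n + 1) k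
        = ∑ k ∈ Finset.range (n + 1),
            (-((-1 : ℤ) ^ (n + (k + 1)) * ((k + 1) * wardW n (k + 1)))
              + (-1 : ℤ) ^ (n + k) * ((n + k + 1) * wardW n k)) := by
      rw [Finset.sum_range_succ']
      have h0 : wardW (n + 1) 0 = 0 := rfl
      rw [h0]
      push_cast
      rw [mul_zero, add_zero]
      refine Finset.sum_congr rfl fun k _ => ?_
      have hw : (wardW (n + 1) (k + 1) : ℤ)
          = (k + 1) * wardW n (k + 1) + (n + k + 1) * wardW n k := by
        show ((((k + 1) * wardW n (k + 1) + (n + k + 1) * wardW n k : ℕ)) : ℤ) = _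
        push_cast; ring
      rw [hw]
      simp [pow_add, pow_succ]
      ring
    rw [step, Finset.sum_add_distrib, Finset.sum_neg_distrib]
    have pshift : ∑ k ∈ Finset.range (n + 1),
        (-1 : ℤ) ^ (n + (k + 1)) * ((k + 1) * wardW n (k + 1))
        = ∑ k ∈ Finset.range (n + 1), (-1 : ℤ) ^ (n + k) * (k * wardW n k) := by
      have h2 : ∑ k ∈ Finset.range (n + 2), (-1 : ℤ) ^ (n + k) * (k * wardW n k)
          = (∑ k ∈ Finset.range (n + 1),
              (-1 : ℤ) ^ (n + (k + 1)) * ((k + 1) * wardW n (k + 1)))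
            + (-1 : ℤ) ^ (n + 0) * (0 * wardW n 0) := Finset.sum_range_succ' _ _
      have h3 : ∑ k ∈ Finset.range (n + 2), (-1 : ℤ) ^ (n + k) * (k * wardW n k)
          = (∑ k ∈ Finset.range (n + 1), (-1 : ℤ) ^ (n + k) * (k * wardW n k))
            + (-1 : ℤ) ^ (n + (n + 1)) * ((n + 1) * wardW n (n + 1)) :=
        Finset.sum_range_succ _ _
      rw [wardW_eq_zero n (n + 1) (Nat.lt_succ_self n)] at h3
      simp only [Nat.cast_zero, mul_zero, zero_mul, add_zero] at h2 h3
      rw [← h2, h3]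
    rw [pshift]
    have comb : -(∑ k ∈ Finset.range (n + 1), (-1 : ℤ) ^ (n + k) * (k * wardW n k))
        + ∑ k ∈ Finset.range (n + 1), (-1 : ℤ) ^ (n + k) * ((n + k + 1) * wardW n k)
        = (n + 1 : ℤ) * ∑ k ∈ Finset.range (n + 1), (-1 : ℤ) ^ (n + k) * wardW n k := by
      rw [neg_add_eq_sub, ← Finset.sum_sub_distrib, Finset.mul_sum]
      refine Finset.sum_congr rfl fun k _ => ?_
      ring
    rw [comb, ih, Nat.factorial_succ]
    push_cast; ring

theorem ward_alternating_sum (n : ℕ) (hn : 1 ≤ n) :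
    ∑ k ∈ Finset.range (n + 1), (-1 : ℤ) ^ (n + k) * wardW n k = (n.factorial : ℤ) := by
  exact ward_sum n
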